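/- Let G be a multiset of vectors from F_2^k in which every nonzero vector occurs exactly 2m times (m a positive integer), and fix a nonzero r ∈ F_2^k. Then the maximum number of pairwise disjoint recovery sets for r in G is exactly m·2^k, and the unique service achieving m·2^k recovery sets (with equal columns indistinguishable) uses 2m copies of the singleton {r} and 2m copies of each pair {e, r+e} for e ∉ {0, r}; in particular it uses every nonzero element of G. -/

import Mathlib

section Aux

variable {k : ℕ}

private lemma V_add_self (x : Fin k → ZMod 2) : x + x = 0 := by
  funext i
  have h : ∀ y : ZMod 2, y + y = 0 := by decide
  exact h (x i)

private lemma V_cancel (r x : Fin k → ZMod 2) : r + (r + x) = x := by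
  rw [← add_assoc, V_add_self, zero_add]

private lemma V_eq_add_of_add_eq {r x y : Fin k → ZMod 2} (h : x + y = r) : y = r + x := by
  rw [← h, add_comm x y, add_assoc, V_add_self, add_zero]

private lemma V_pair_sum (r a : Fin k → ZMod 2) : a + (r + a) = r := by
  rw [add_comm a (r + a), add_assoc, V_add_self, add_zero]

private lemma V_ne_add_self {r : Fin k → ZMod 2} (hr : r ≠ 0) (x : Fin k → ZMod 2) :
    x ≠ r + x := by
  intro h
  have h2 : x + x = (r + x) + x := by rw [← h]
  rw [V_add_self, add_assoc, V_add_self, add_zero] at h2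
  exact hr h2.symm

private lemma mpair_comm {α : Type*} (a b : α) : ({a, b} : Multiset α) = {b, a} := by
  simpa [Multiset.insert_eq_cons] using Multiset.cons_swap a b 0

private lemma mpair_card {α : Type*} (a b : α) :
    Multiset.card ({a, b} : Multiset α) = 2 := rfl

private lemma mpair_eq {α : Type*} [DecidableEq α] {a b c d : α}
    (h : ({a, b} : Multiset α) = {c, d}) : (a = c ∧ b = d) ∨ (a = d ∧ b = c) := by
  have ha : a ∈ ({c, d} : Multiset α) := by rw [← h]; simp [Multiset.insert_eq_cons]
  simp only [Multiset.insert_eq_cons, Multiset.mem_cons, Multiset.mem_singleton] at ha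
  simp only [Multiset.insert_eq_cons] at h
  rcases ha with rfl | rfl
  · left
    exact ⟨rfl, by simpa using (Multiset.cons_inj_right a).mp h⟩
  · right
    refine ⟨rfl, ?_⟩
    rw [show (c ::ₘ ({a} : Multiset α)) = a ::ₘ ({c} : Multiset α) from Multiset.cons_swap c a 0] at h
    simpa using (Multiset.cons_inj_right a).mp h

private lemma mpair_count {α : Type*} [DecidableEq α] (x a b : α) :
    Multiset.count x ({a, b} : Multiset α)
      = (if x = a then 1 else 0) + (if x = b then 1 else 0) := by
  simp only [Multiset.insert_eq_cons, Multiset.count_cons, Multiset.count_singleton]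
  rw [add_comm]

private lemma mpair_mem {α : Type*} {x a b : α} :
    x ∈ ({a, b} : Multiset α) ↔ x = a ∨ x = b := by
  simp [Multiset.insert_eq_cons]

private lemma card_finsum {α : Type*} {ι : Type*} (s : Finset ι) (f : ι → Multiset α) :
    Multiset.card (∑ i ∈ s, f i) = ∑ i ∈ s, Multiset.card (f i) := by
  classical
  induction s using Finset.induction with
  | empty => simp
  | insert _ _ h ih => simp [Finset.sum_insert h, ih]

private lemma eq_of_sum_eq {ι : Type*} {s : Finset ι} {f : ι → ℕ} {c : ℕ}
    (h : ∀ i ∈ s, c ≤ f i) (he : ∑ i ∈ s, f i = s.card * c) : ∀ i ∈ s, f i = c := by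
  intro i hi
  by_contra hne
  have h3 : c < f i := lt_of_le_of_ne (h i hi) (Ne.symm hne)
  have hlt : ∑ _j ∈ s, c < ∑ j ∈ s, f j := Finset.sum_lt_sum (fun j hj => h j hj) ⟨i, hi, h3⟩
  rw [Finset.sum_const, smul_eq_mul, he] at hlt
  exact lt_irrefl _ hlt

private lemma shape_pos {r : Fin k → ZMod 2} (hr : r ≠ 0) {s : Multiset (Fin k → ZMod 2)}
    (hsum : s.sum = r) : 1 ≤ Multiset.card s := by
  rcases Nat.eq_zero_or_pos (Multiset.card s) with h | h
  · rw [Multiset.card_eq_zero.mp h, Multiset.sum_zero] at hsum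
    exact absurd hsum.symm hr
  · exact h

private lemma shape_one {r : Fin k → ZMod 2} {s : Multiset (Fin k → ZMod 2)}
    (hsum : s.sum = r) (h1 : Multiset.card s = 1) : s = {r} := by
  obtain ⟨a, rfl⟩ := Multiset.card_eq_one.mp h1
  rw [Multiset.sum_singleton] at hsum
  rw [hsum]

private lemma shape_two {r : Fin k → ZMod 2} (hr : r ≠ 0)
    {s : Multiset (Fin k → ZMod 2)} (h0 : (0 : Fin k → ZMod 2) ∉ s)
    (hsum : s.sum = r) (h2 : Multiset.card s = 2) :
    ∃ a, a ≠ 0 ∧ a ≠ r ∧ s = {a, r + a} := by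
  obtain ⟨a, b, rfl⟩ := Multiset.card_eq_two.mp h2
  have hs : a + b = r := by
    simpa [Multiset.insert_eq_cons, Multiset.sum_cons, Multiset.sum_singleton] using hsum
  have hb : b = r + a := V_eq_add_of_add_eq hs
  have ha0 : a ≠ 0 := fun h => h0 (by rw [h] at *; exact mpair_mem.mpr (Or.inl rfl))
  have hb0 : b ≠ 0 := fun h => h0 (by rw [h] at *; exact mpair_mem.mpr (Or.inr rfl))
  exact ⟨a, ha0, fun har => hb0 (by rw [hb, har, V_add_self]), by rw [hb]⟩

private lemma core {m t : ℕ} (hm : 0 < m) {r : Fin k → ZMod 2} (hr : r ≠ 0)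
    {G : Multiset (Fin k → ZMod 2)}
    (hG : ∀ e : Fin k → ZMod 2, e ≠ 0 → G.count e = 2 * m)
    (S : Fin t → Multiset (Fin k → ZMod 2))
    (hle : (∑ i, S i) ≤ G)
    (hS : ∀ i, (0 : Fin k → ZMod 2) ∉ S i ∧ (S i).sum = r) :
    t ≤ m * 2 ^ k ∧
    (t = m * 2 ^ k →
      ((Finset.univ.filter fun i => S i = {r}).card = 2 * m ∧
       (∀ i, S i ≠ {r} → ∃ a, a ≠ 0 ∧ a ≠ r ∧ S i = {a, r + a}) ∧
       (∑ i, S i) = G.filter (fun e => e ≠ 0))) := by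
  classical
  have hcount0 : Multiset.count 0 (∑ i, S i) = 0 := by
    rw [Multiset.count_sum']
    exact Finset.sum_eq_zero fun i _ => Multiset.count_eq_zero.mpr (hS i).1
  have hTG : (∑ i, S i) ≤ G.filter (fun e => e ≠ 0) := by
    refine (Multiset.le_filter).mpr ⟨hle, fun a ha h0 => ?_⟩
    rw [h0] at ha
    have := Multiset.count_pos.mpr ha
    omega
  have hcardV : Fintype.card (Fin k → ZMod 2) = 2 ^ k := by simp
  have hcGf : Multiset.card (G.filter (fun e => e ≠ 0)) + 2 * m = 2 * (m * 2 ^ k) := by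
    have h1 : Multiset.card (G.filter (fun e => e ≠ 0))
        = ∑ a : (Fin k → ZMod 2), (G.filter (fun e => e ≠ 0)).count a := by
      rw [← Multiset.toFinset_sum_count_eq]
      refine Finset.sum_subset (Finset.subset_univ _) (fun x _ hx => ?_)
      exact Multiset.count_eq_zero.mpr (fun hmem => hx (Multiset.mem_toFinset.mpr hmem))
    have h3 : ∑ a : Fin k → ZMod 2, (G.filter (fun e => e ≠ 0)).count a
        = ∑ a ∈ Finset.univ.filter (fun a : Fin k → ZMod 2 => a ≠ 0), 2 * m := by
      rw [Finset.sum_filter]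
      refine Finset.sum_congr rfl fun a _ => ?_
      by_cases h : a = 0
      · rw [if_neg (by simp [h]), h, Multiset.count_filter_of_neg (p := fun e => e ≠ 0) (by simp)]
      · rw [if_pos h, Multiset.count_filter_of_pos (p := fun e => e ≠ 0) h, hG a h]
    have h4 : (Finset.univ.filter fun a : Fin k → ZMod 2 => a ≠ 0).card = 2 ^ k - 1 := by
      rw [Finset.filter_ne', Finset.card_erase_of_mem (Finset.mem_univ _),
        Finset.card_univ, hcardV]
    have h5 : 1 ≤ 2 ^ k := Nat.one_le_two_pow
    rw [h1, h3, Finset.sum_const, smul_eq_mul, h4]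
    have h6 : 2 ^ k - 1 + 1 = 2 ^ k := by omega
    calc (2 ^ k - 1) * (2 * m) + 2 * m = ((2 ^ k - 1) + 1) * (2 * m) := by ring
      _ = 2 ^ k * (2 * m) := by rw [h6]
      _ = 2 * (m * 2 ^ k) := by ring
  set A := Finset.univ.filter (fun i => Multiset.card (S i) = 1) with hA
  have hA1 : ∀ i ∈ A, S i = {r} := fun i hi =>
    shape_one (hS i).2 (by simpa [hA] using hi)
  have hAle : A.card ≤ 2 * m := by
    have h2 : A.card ≤ ∑ i, Multiset.count r (S i) := by
      calc A.card = ∑ _i ∈ A, 1 := by simp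
        _ ≤ ∑ i ∈ A, Multiset.count r (S i) :=
            Finset.sum_le_sum (fun i hi => by rw [hA1 i hi]; simp)
        _ ≤ ∑ i, Multiset.count r (S i) :=
            Finset.sum_le_sum_of_subset (Finset.subset_univ A)
    have h3 : ∑ i, Multiset.count r (S i) = Multiset.count r (∑ i, S i) :=
      (Multiset.count_sum').symm
    have h4 : Multiset.count r (∑ i, S i) ≤ Multiset.count r (G.filter (fun e => e ≠ 0)) :=
      Multiset.le_iff_count.mp hTG r
    have h5 : Multiset.count r (G.filter (fun e => e ≠ 0)) = 2 * m := by
      rw [Multiset.count_filter_of_pos (p := fun e => e ≠ 0) hr, hG r hr]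
    omega
  have hcardT : Multiset.card (∑ i, S i) = ∑ i, Multiset.card (S i) := card_finsum _ _
  have hTle : Multiset.card (∑ i, S i) ≤ Multiset.card (G.filter (fun e => e ≠ 0)) :=
    Multiset.card_le_card hTG
  have hsplit : ∑ i ∈ A, Multiset.card (S i) + ∑ i ∈ Aᶜ, Multiset.card (S i)
      = ∑ i, Multiset.card (S i) := Finset.sum_add_sum_compl A _
  have hAsum : ∑ i ∈ A, Multiset.card (S i) = A.card := by
    calc ∑ i ∈ A, Multiset.card (S i) = ∑ _i ∈ A, 1 :=
        Finset.sum_congr rfl (fun i hi => by rw [hA1 i hi]; simp)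
      _ = A.card := by simp
  have hcompl2 : ∀ i ∈ Aᶜ, 2 ≤ Multiset.card (S i) := by
    intro i hi
    have h1 := shape_pos hr (hS i).2
    have h2 : ¬ (Multiset.card (S i) = 1) := by
      have := Finset.mem_compl.mp hi
      simpa [hA] using this
    omega
  have hcompl_sum : 2 * Aᶜ.card ≤ ∑ i ∈ Aᶜ, Multiset.card (S i) := by
    calc 2 * Aᶜ.card = ∑ _i ∈ Aᶜ, 2 := by simp [mul_comm]
      _ ≤ _ := Finset.sum_le_sum hcompl2
  have hsplitcard : A.card + Aᶜ.card = t := by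
    have := Finset.card_add_card_compl A
    simpa using this
  constructor
  · -- upper bound
    omega
  · intro ht
    have h6 : Multiset.card (∑ i, S i) = Multiset.card (G.filter (fun e => e ≠ 0))
        ∧ A.card = 2 * m ∧ ∑ i ∈ Aᶜ, Multiset.card (S i) = Aᶜ.card * 2 := by
      omega
    have hTGf : (∑ i, S i) = G.filter (fun e => e ≠ 0) :=
      Multiset.eq_of_le_of_card_le hTG (le_of_eq h6.1.symm)
    have hshape2 : ∀ i, S i ≠ {r} → ∃ a, a ≠ 0 ∧ a ≠ r ∧ S i = {a, r + a} := by
      intro i hne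
      have hiA : i ∈ Aᶜ := by
        rw [Finset.mem_compl, hA, Finset.mem_filter]
        rintro ⟨-, h1⟩
        exact hne (shape_one (hS i).2 h1)
      have h2 : Multiset.card (S i) = 2 := eq_of_sum_eq hcompl2 h6.2.2 i hiA
      exact shape_two hr (hS i).1 (hS i).2 h2
    have hAeq' : Finset.univ.filter (fun i => S i = {r}) = A := by
      ext i
      rw [hA]
      simp only [Finset.mem_filter, Finset.mem_univ, true_and]
      constructor
      · intro h; rw [h]; rfl
      · intro h; exact shape_one (hS i).2 h
    exact ⟨by rw [hAeq']; exact h6.2.1, hshape2, hTGf⟩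

end Aux

/-- if every nonzero vector occurs in `G` exactly `2m` times
(`m > 0`) and `r ≠ 0`, then the maximum number of pairwise disjoint recovery
sets for `r` (of nonzero columns) in `G` is exactly `m·2^k`; moreover any
service by `m·2^k` such recovery sets is, as a multiset of recovery sets,
exactly `2m` copies of `{r}` together with `2m` copies of each pair `{e, r+e}`
for `e ∉ {0, r}` (the bind below produces each unordered pair `2m` times,
`m` times from `e` and `m` times from `r+e`), and it uses every nonzero
element of `G`. -/
theorem unique_maximal_service_for_constant_request (k m : ℕ) (hm : 0 < m)
    (r : Fin k → ZMod 2) (hr : r ≠ 0)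
    (G : Multiset (Fin k → ZMod 2))
    (hG : ∀ e : Fin k → ZMod 2, e ≠ 0 → G.count e = 2 * m) :
    IsGreatest
      {t : ℕ | ∃ S : Fin t → Multiset (Fin k → ZMod 2),
        (∑ i, S i) ≤ G ∧ ∀ i, (0 : Fin k → ZMod 2) ∉ S i ∧ (S i).sum = r}
      (m * 2 ^ k) ∧
    ∀ S : Fin (m * 2 ^ k) → Multiset (Fin k → ZMod 2),
      (∑ i, S i) ≤ G → (∀ i, (0 : Fin k → ZMod 2) ∉ S i ∧ (S i).sum = r) →
      (↑(List.ofFn S) : Multiset (Multiset (Fin k → ZMod 2))) =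
        Multiset.replicate (2 * m) ({r} : Multiset (Fin k → ZMod 2)) +
          (Finset.univ.filter (fun e : Fin k → ZMod 2 => e ≠ 0 ∧ e ≠ r)).val.bind
            (fun e => Multiset.replicate m ({e, r + e} : Multiset (Fin k → ZMod 2)))
      ∧ (∑ i, S i) = G.filter (fun e => e ≠ 0) := by
  classical
  rcases Nat.eq_zero_or_pos k with hk0 | hk
  · subst hk0; exact absurd (Subsingleton.elim r 0) hr
  set fs : Finset (Fin k → ZMod 2) :=
    Finset.univ.filter (fun e : Fin k → ZMod 2 => e ≠ 0 ∧ e ≠ r) with hfs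
  have hmemfs : ∀ e, e ∈ fs ↔ (e ≠ 0 ∧ e ≠ r) := by
    intro e; rw [hfs]; simp
  have hrafs : ∀ e : Fin k → ZMod 2, e ≠ 0 → e ≠ r → (r + e) ∈ fs := by
    intro e he0 her
    rw [hmemfs]
    constructor
    · intro h
      exact her (by rw [← V_cancel r e, h, add_zero])
    · intro h
      exact he0 (by rw [← V_cancel r e, h, V_add_self])
  have hcardV : Fintype.card (Fin k → ZMod 2) = 2 ^ k := by simp
  have hK2 : 2 ≤ 2 ^ k := by
    calc 2 = 2 ^ 1 := by norm_num
      _ ≤ 2 ^ k := Nat.pow_le_pow_right (by norm_num) hk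
  have hfscard : fs.card = 2 ^ k - 2 := by
    have h1 : fs = Finset.univ \ ({0, r} : Finset (Fin k → ZMod 2)) := by
      ext e
      rw [hmemfs]
      simp [not_or]
    rw [h1, Finset.card_sdiff_of_subset (Finset.subset_univ _), Finset.card_univ, hcardV]
    rw [Finset.card_insert_of_notMem (by simpa using (Ne.symm hr)), Finset.card_singleton]
  -- the canonical service
  set M : Multiset (Multiset (Fin k → ZMod 2)) :=
    Multiset.replicate (2 * m) ({r} : Multiset (Fin k → ZMod 2)) +
      fs.val.bind (fun e => Multiset.replicate m ({e, r + e} : Multiset (Fin k → ZMod 2)))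
    with hM
  have hMcard : Multiset.card M = m * 2 ^ k := by
    rw [hM, Multiset.card_add, Multiset.card_replicate, Multiset.card_bind]
    have h1 : fs.val.map (Multiset.card ∘ fun e => Multiset.replicate m
        ({e, r + e} : Multiset (Fin k → ZMod 2))) = fs.val.map (fun _ => m) := by
      refine Multiset.map_congr rfl fun e _ => ?_
      simp [Multiset.card_replicate]
    rw [h1, Multiset.map_const', Multiset.sum_replicate, smul_eq_mul, ← Finset.card_def, hfscard]
    have h2 : 2 ^ k - 2 + 2 = 2 ^ k := by omega
    calc 2 * m + (2 ^ k - 2) * m = ((2 ^ k - 2) + 2) * m := by ring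
      _ = m * 2 ^ k := by rw [h2]; ring
  have hMmem : ∀ c ∈ M, (0 : Fin k → ZMod 2) ∉ c ∧ c.sum = r := by
    intro c hc
    rw [hM, Multiset.mem_add] at hc
    rcases hc with hc | hc
    · rw [Multiset.eq_of_mem_replicate hc]
      constructor
      · simp [Ne.symm hr]
      · exact Multiset.sum_singleton r
    · obtain ⟨e, hefs, hce⟩ := Multiset.mem_bind.mp hc
      have he : e ≠ 0 ∧ e ≠ r := (hmemfs e).mp hefs
      rw [Multiset.eq_of_mem_replicate hce]
      constructor
      · rw [mpair_mem]
        rintro (h | h)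
        · exact he.1 h.symm
        · exact he.2 (by rw [← V_cancel r e, ← h, add_zero])
      · rw [show ({e, r + e} : Multiset (Fin k → ZMod 2)).sum = e + (r + e) by
          simp [Multiset.insert_eq_cons]]
        exact V_pair_sum r e
  have hMsum : M.sum = G.filter (fun e => e ≠ 0) := by
    ext a
    rw [hM, Multiset.sum_add]
    rw [Multiset.count_add, Multiset.sum_replicate, Multiset.count_nsmul]
    have hbind : (fs.val.bind (fun e => Multiset.replicate m
        ({e, r + e} : Multiset (Fin k → ZMod 2)))).sum
        = (fs.val.map (fun e => m • ({e, r + e} : Multiset (Fin k → ZMod 2)))).sum := by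
      rw [Multiset.bind, Multiset.sum_join, Multiset.map_map]
      congr 1
      refine Multiset.map_congr rfl fun e _ => ?_
      exact Multiset.sum_replicate m _
    rw [hbind, Multiset.count_sum]
    have hmapped : fs.val.map ((fun b => Multiset.count a
          (m • ({b, r + b} : Multiset (Fin k → ZMod 2)))))
        = fs.val.map (fun b => m * Multiset.count a ({b, r + b} : Multiset (Fin k → ZMod 2))) := by
      refine Multiset.map_congr rfl fun e _ => ?_
      exact Multiset.count_nsmul a m _
    rw [hmapped]
    have hsum_fin : (fs.val.map (fun b => m * Multiset.count a
        ({b, r + b} : Multiset (Fin k → ZMod 2)))).sum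
        = ∑ b ∈ fs, m * Multiset.count a ({b, r + b} : Multiset (Fin k → ZMod 2)) := rfl
    rw [hsum_fin]
    by_cases ha0 : a = 0
    · subst ha0
      rw [Multiset.count_filter_of_neg (p := fun e => e ≠ 0) (by simp)]
      rw [Multiset.count_singleton, if_neg (Ne.symm hr)]
      rw [Finset.sum_eq_zero, mul_zero, add_zero]
      intro b hb
      have hbfs := (hmemfs b).mp hb
      rw [mpair_count, if_neg (fun h => hbfs.1 h.symm),
        if_neg (fun h => hbfs.2 (by rw [← V_cancel r b, ← h, add_zero]))]
      simp
    · rw [Multiset.count_filter_of_pos (p := fun e => e ≠ 0) ha0, hG a ha0]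
      by_cases har : a = r
      · subst har
        rw [Multiset.count_singleton, if_pos rfl, mul_one]
        rw [Finset.sum_eq_zero, add_zero]
        intro b hb
        have hbfs := (hmemfs b).mp hb
        rw [mpair_count, if_neg (fun h => hbfs.2 h.symm),
          if_neg (fun h => hbfs.1 (by rw [← V_cancel a b, ← h, V_add_self]))]
        simp
      · rw [Multiset.count_singleton, if_neg har, mul_zero, zero_add]
        have hsplit : ∀ b ∈ fs, m * Multiset.count a ({b, r + b} : Multiset (Fin k → ZMod 2))
            = (if b = a then m else 0) + (if b = r + a then m else 0) := by
          intro b hb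
          rw [mpair_count, mul_add]
          congr 1
          · by_cases h : a = b
            · rw [if_pos h, if_pos h.symm, mul_one]
            · rw [if_neg h, if_neg (Ne.symm h), mul_zero]
          · by_cases h : a = r + b
            · rw [if_pos h, if_pos (by rw [h, V_cancel]), mul_one]
            · rw [if_neg h, if_neg (fun h2 => h (by rw [h2, V_cancel])), mul_zero]
        rw [Finset.sum_congr rfl hsplit, Finset.sum_add_distrib,
          Finset.sum_ite_eq' fs a (fun _ => m), Finset.sum_ite_eq' fs (r + a) (fun _ => m),
          if_pos ((hmemfs a).mpr ⟨ha0, har⟩), if_pos (hrafs a ha0 har)]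
        ring
  -- membership
  have hmem : ∀ (t : ℕ), M.toList.length = t →
      ∃ S : Fin t → Multiset (Fin k → ZMod 2),
        (∑ i, S i) ≤ G ∧ ∀ i, (0 : Fin k → ZMod 2) ∉ S i ∧ (S i).sum = r := by
    rintro t rfl
    refine ⟨M.toList.get, ?_, ?_⟩
    · have h1 : ∑ i, M.toList.get i = M.toList.sum := by
        rw [← List.sum_ofFn, List.ofFn_get]
      rw [h1, Multiset.sum_toList, hMsum]
      exact Multiset.filter_le _ G
    · intro i
      exact hMmem _ (Multiset.mem_toList.mp (List.get_mem M.toList i))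
  have hlen : M.toList.length = m * 2 ^ k := by rw [Multiset.length_toList, hMcard]
  refine ⟨⟨hmem _ hlen, ?_⟩, ?_⟩
  · rintro t ⟨S, h1, h2⟩
    exact (core hm hr hG S h1 h2).1
  · intro S hle hS
    obtain ⟨-, hcore⟩ := core hm hr hG S hle hS
    obtain ⟨hAcard, hshape, hTGf⟩ := hcore rfl
    refine ⟨?_, hTGf⟩
    have hcnt : ∀ e : Fin k → ZMod 2, e ≠ 0 → Multiset.count e (∑ i, S i) = 2 * m := by
      intro e he
      rw [hTGf, Multiset.count_filter_of_pos (p := fun e => e ≠ 0) he, hG e he]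
    have hofn : ((List.ofFn S : List (Multiset (Fin k → ZMod 2))) :
        Multiset (Multiset (Fin k → ZMod 2))) = Multiset.map S Finset.univ.val := by
      rw [List.ofFn_eq_map]
      rfl
    ext c
    rw [hofn, Multiset.count_add, Multiset.count_replicate]
    have hLHS : Multiset.count c (Multiset.map S Finset.univ.val)
        = (Finset.univ.filter fun i => c = S i).card := by
      rw [Multiset.count_map]
      rfl
    have hRHS : Multiset.count c (fs.val.bind (fun e => Multiset.replicate m
          ({e, r + e} : Multiset (Fin k → ZMod 2))))
        = ∑ e ∈ fs, (if ({e, r + e} : Multiset (Fin k → ZMod 2)) = c then m else 0) := by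
      rw [Multiset.count_bind]
      have h1 : fs.val.map (fun e => Multiset.count c (Multiset.replicate m
            ({e, r + e} : Multiset (Fin k → ZMod 2))))
          = fs.val.map (fun e => if ({e, r + e} : Multiset (Fin k → ZMod 2)) = c then m
              else 0) := by
        refine Multiset.map_congr rfl fun e _ => ?_
        exact Multiset.count_replicate _ _ _
      rw [h1]
      rfl
    rw [hLHS, hRHS]
    by_cases hc1 : c = ({r} : Multiset (Fin k → ZMod 2))
    · subst hc1
      rw [if_pos rfl]
      have h1 : (Finset.univ.filter fun i => ({r} : Multiset (Fin k → ZMod 2)) = S i)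
          = (Finset.univ.filter fun i => S i = {r}) := by
        ext i; simp [eq_comm]
      rw [h1, hAcard, Finset.sum_eq_zero, add_zero]
      intro e he
      rw [if_neg]
      intro h
      have := congrArg Multiset.card h
      rw [mpair_card, Multiset.card_singleton] at this
      omega
    · rw [if_neg (fun h => hc1 h.symm), zero_add]
      by_cases hex : ∃ e₀, e₀ ∈ fs ∧ c = ({e₀, r + e₀} : Multiset (Fin k → ZMod 2))
      · obtain ⟨e₀, he₀fs, rfl⟩ := hex
        have he₀ := (hmemfs e₀).mp he₀fs
        -- LHS = 2 * m via counting e₀ in the total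
        have hcount_i : ∀ i, Multiset.count e₀ (S i)
            = if ({e₀, r + e₀} : Multiset (Fin k → ZMod 2)) = S i then 1 else 0 := by
          intro i
          by_cases hi : S i = ({r} : Multiset (Fin k → ZMod 2))
          · rw [hi, Multiset.count_singleton, if_neg he₀.2, if_neg]
            intro h
            have := congrArg Multiset.card h
            rw [mpair_card, Multiset.card_singleton] at this
            omega
          · obtain ⟨a, ha0, har, hSi⟩ := hshape i hi
            rw [hSi, mpair_count]
            by_cases h2 : e₀ = a
            · subst h2
              rw [if_pos rfl, if_neg (V_ne_add_self hr e₀), if_pos rfl]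
            · by_cases h3 : e₀ = r + a
              · rw [if_neg h2, if_pos h3, if_pos]
                subst h3
                rw [V_cancel]
                exact mpair_comm _ _
              · rw [if_neg h2, if_neg h3, if_neg]
                intro h
                rcases mpair_eq h with ⟨h4, -⟩ | ⟨h4, -⟩
                · exact h2 h4
                · exact h3 h4
        have hLHS2 : (Finset.univ.filter fun i =>
            ({e₀, r + e₀} : Multiset (Fin k → ZMod 2)) = S i).card = 2 * m := by
          have h1 := hcnt e₀ he₀.1
          rw [Multiset.count_sum'] at h1
          rw [Finset.card_filter]
          rw [Finset.sum_congr rfl (fun i _ => (hcount_i i))] at h1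
          exact h1
        rw [hLHS2]
        -- RHS = m + m
        have hsplit2 : ∀ b ∈ fs,
            (if ({b, r + b} : Multiset (Fin k → ZMod 2)) = {e₀, r + e₀} then m else 0)
            = (if b = e₀ then m else 0) + (if b = r + e₀ then m else 0) := by
          intro b hb
          by_cases h2 : b = e₀
          · subst h2
            rw [if_pos rfl, if_pos rfl, if_neg (V_ne_add_self hr b), add_zero]
          · by_cases h3 : b = r + e₀
            · subst h3
              rw [if_neg h2, if_pos rfl, zero_add, if_pos]
              rw [V_cancel]
              exact mpair_comm _ _
            · rw [if_neg h2, if_neg h3, add_zero, if_neg]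
              intro h
              rcases mpair_eq h with ⟨h4, -⟩ | ⟨h4, -⟩
              · exact h2 h4
              · exact h3 h4
        rw [Finset.sum_congr rfl hsplit2, Finset.sum_add_distrib,
          Finset.sum_ite_eq' fs e₀ (fun _ => m), Finset.sum_ite_eq' fs (r + e₀) (fun _ => m),
          if_pos he₀fs, if_pos (hrafs e₀ he₀.1 he₀.2)]
        omega
      · -- c is neither {r} nor a pair: both sides vanish
        have hL0 : (Finset.univ.filter fun i => c = S i).card = 0 := by
          rw [Finset.card_eq_zero, Finset.filter_eq_empty_iff]
          intro i _
          intro hci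
          by_cases hi : S i = ({r} : Multiset (Fin k → ZMod 2))
          · exact hc1 (hci.trans hi)
          · obtain ⟨a, ha0, har, hSi⟩ := hshape i hi
            exact hex ⟨a, (hmemfs a).mpr ⟨ha0, har⟩, hci.trans hSi⟩
        rw [hL0, Finset.sum_eq_zero]
        intro b hb
        rw [if_neg]
        intro h
        exact hex ⟨b, hb, h.symm⟩
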